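/- Let β > 0, λ ∈ ℝ, and let m be an odd integer. Then ( Σ_{n∈ℤ} e^{mβn − βn² + λn} ) / ( Σ_{n∈ℤ} e^{−βn² + λn} ) = Z(β, λ/(2β)) · e^{β m²/4 + λ m/2}, where Z(β, α) = ( Σ_{n∈ℤ} e^{−β(n − α − 1/2)²} ) / ( Σ_{n∈ℤ} e^{−β(n − α)²} ). -/
import Mathlib


/-- The theta-function ratio Z(β, α) = (Σₙ e^{−β(n−α−1/2)²}) / (Σₙ e^{−β(n−α)²}). -/
noncomputable def thetaRatio (β α : ℝ) : ℝ :=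
  (∑' n : ℤ, Real.exp (-β * ((n : ℝ) - α - 1 / 2) ^ 2))
    / (∑' n : ℤ, Real.exp (-β * ((n : ℝ) - α) ^ 2))

/-- for β > 0, λ ∈ ℝ and m an odd integer, the expectation of
e^{mβz} under the discrete Gaussian weight n ↦ e^{−βn² + λn} on ℤ equals
Z(β, λ/(2β)) · e^{βm²/4 + λm/2}. -/
theorem discrete_gaussian_exponential_expectation_odd
    (β : ℝ) (hβ : 0 < β) (lam : ℝ) (m : ℤ) (hm : Odd m) :
    (∑' n : ℤ, Real.exp ((m : ℝ) * β * (n : ℝ) - β * (n : ℝ) ^ 2 + lam * (n : ℝ)))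
      / (∑' n : ℤ, Real.exp (-β * (n : ℝ) ^ 2 + lam * (n : ℝ)))
    = thetaRatio β (lam / (2 * β))
        * Real.exp (β * (m : ℝ) ^ 2 / 4 + lam * (m : ℝ) / 2) := by
  obtain ⟨k, hk⟩ := hm
  have hβ' : β ≠ 0 := ne_of_gt hβ
  set α : ℝ := lam / (2 * β) with hα
  have hnum : (∑' n : ℤ, Real.exp ((m : ℝ) * β * (n : ℝ) - β * (n : ℝ) ^ 2 + lam * (n : ℝ)))
      = Real.exp (β * (α + (m : ℝ) / 2) ^ 2) *
        ∑' n : ℤ, Real.exp (-β * ((n : ℝ) - α - 1 / 2) ^ 2) := by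
    rw [← tsum_mul_left]
    rw [← (Equiv.subRight k).tsum_eq
      (fun n : ℤ => Real.exp (β * (α + (m : ℝ) / 2) ^ 2) *
        Real.exp (-β * ((n : ℝ) - α - 1 / 2) ^ 2))]
    refine tsum_congr fun n => ?_
    rw [← Real.exp_add]
    congr 1
    have hm' : (m : ℝ) = 2 * (k : ℝ) + 1 := by exact_mod_cast congrArg Int.cast hk
    simp only [Equiv.subRight_apply, Int.cast_sub]
    rw [hα, hm']
    field_simp
    ring
  have hden : (∑' n : ℤ, Real.exp (-β * (n : ℝ) ^ 2 + lam * (n : ℝ)))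
      = Real.exp (β * α ^ 2) * ∑' n : ℤ, Real.exp (-β * ((n : ℝ) - α) ^ 2) := by
    rw [← tsum_mul_left]
    refine tsum_congr fun n => ?_
    rw [← Real.exp_add]
    congr 1
    rw [hα]
    field_simp
    ring
  rw [hnum, hden, thetaRatio, mul_div_mul_comm, ← Real.exp_sub, mul_comm]
  congr 2
  rw [hα]
  field_simp
  ring
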